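/- Unrestricted floating-point GNNs are strictly more expressive than bounded floating-point GNNs: the property 'the distinguished node has an even number of out-neighbours' is expressible by an unrestricted GNN[F], but for every k, no GNN with aggregation function invariant under capping multiplicities at k can express it, since such a GNN cannot distinguish the centers of two star graphs with k and k+1 out-neighbours respectively. -/

import Mathlib

/-- A finite directed node-labeled graph: finite node set `V`, out-neighbour
finsets `adj v`, and a labeling of nodes by sets of node label symbols from `α`. -/
structure LGraph (α : Type) : Type 1 where
  V : Type
  fintypeV : Fintype V
  adj : V → Finset V
  label : V → Set α

attribute [instance] LGraph.fintypeV

/-- A (recurrent) graph neural network over feature values `S` with dimension `d`: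
an initialization function from label sets to feature vectors, an aggregation function on
multisets of feature vectors, a combination function, and a set of accepting vectors. -/
structure FGNN (α S : Type) (d : ℕ) where
  init : Set α → (Fin d → S)
  agg : Multiset (Fin d → S) → (Fin d → S)
  comb : (Fin d → S) → (Fin d → S) → (Fin d → S)
  acc : Set (Fin d → S)

/-- The feature vector of a node at each round:
`x_v⁰ = init (label v)` and `x_v^{t+1} = comb (x_v^t) (agg {{ x_u^t : (v,u) ∈ E }})`. -/
def FGNN.state {α S : Type} {d : ℕ} (N : FGNN α S d) (G : LGraph α) : ℕ → G.V → (Fin d → S)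
  | 0, v => N.init (G.label v)
  | n + 1, v => N.comb (N.state G n v) (N.agg ((G.adj v).val.map (N.state G n)))

/-- The GNN accepts `(G, w)` iff `w` visits an accepting feature vector at some round. -/
def FGNN.accepts {α S : Type} {d : ℕ} (N : FGNN α S d) (G : LGraph α) (w : G.V) : Prop :=
  ∃ n : ℕ, N.state G n w ∈ N.acc

/-- The `k`-projection of a multiset: every multiplicity is capped at `k`. -/
noncomputable def capProj {β : Type*} (k : ℕ) (M : Multiset β) : Multiset β :=
  letI := Classical.decEq β
  M.toFinset.val.bind fun a => Multiset.replicate (min k (M.count a)) a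

-- aux

def starG (α : Type) (m : ℕ) : LGraph α where
  V := Option (Fin m)
  fintypeV := inferInstance
  adj := fun v => match v with
    | none => Finset.univ.map ⟨some, Option.some_injective _⟩
    | some _ => ∅
  label := fun _ => ∅

def parityGNN (α : Type) : FGNN α Bool 1 where
  init := fun _ _ => false
  agg := fun M _ => decide (Even (Multiset.card M))
  comb := fun _ y => y
  acc := {f | f 0 = true}

lemma parity_state (α : Type) (G : LGraph α) (w : G.V) (n : ℕ) :
    (parityGNN α).state G (n+1) w = fun _ => decide (Even (G.adj w).card) := by
  induction n generalizing w with
  | zero =>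
    simp [FGNN.state, parityGNN]
  | succ n ih =>
    show (parityGNN α).comb _ ((parityGNN α).agg ((G.adj w).val.map ((parityGNN α).state G (n+1)))) = _
    simp [parityGNN]

lemma capProj_replicate {β : Type*} (k m : ℕ) (a : β) :
    capProj k (Multiset.replicate m a) = Multiset.replicate (min k m) a := by
  classical
  unfold capProj
  rcases Nat.eq_zero_or_pos m with h | h
  · subst h; simp
  · have ht : (Multiset.replicate m a).toFinset = {a} := by
      simp [Multiset.toFinset_replicate, h.ne']
    rw [ht]
    simp [Multiset.count_replicate]

lemma star_leaf_state {α S : Type} {d : ℕ} (N : FGNN α S d) (m m' : ℕ) (n : ℕ)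
    (i : Fin m) (j : Fin m') :
    N.state (starG α m) n (some i) = N.state (starG α m') n (some j) := by
  induction n with
  | zero => rfl
  | succ n ih =>
    show N.comb _ (N.agg (((starG α m).adj (some i)).val.map _)) = _
    rw [ih]
    rfl

lemma star_adj_card (α : Type) (m : ℕ) : ((starG α m).adj none).card = m := by
  simp [starG]

lemma star_center_state {α S : Type} {d : ℕ} (N : FGNN α S d) (k : ℕ)
    (hagg : ∀ M : Multiset (Fin d → S), N.agg M = N.agg (capProj k M)) (n : ℕ) :
    N.state (starG α k) n none = N.state (starG α (k+1)) n none := by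
  induction n with
  | zero => rfl
  | succ n ih =>
    show N.comb (N.state (starG α k) n none)
        (N.agg (((starG α k).adj none).val.map (N.state (starG α k) n)))
      = N.comb (N.state (starG α (k+1)) n none)
        (N.agg (((starG α (k+1)).adj none).val.map (N.state (starG α (k+1)) n)))
    rw [ih]
    have key : ∀ (m : ℕ) (s : Fin d → S),
        (∀ i : Fin m, N.state (starG α m) n (some i) = s) →
        ((starG α m).adj none).val.map (N.state (starG α m) n)
          = Multiset.replicate m s := by
      intro m s hs
      apply Multiset.eq_replicate.mpr
      constructor
      · rw [Multiset.card_map]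
        exact star_adj_card α m
      · intro b hb
        rcases Multiset.mem_map.mp hb with ⟨v, hv, rfl⟩
        simp only [starG, Finset.mem_val, Finset.mem_map, Function.Embedding.coeFn_mk] at hv
        rcases v with _ | i
        · change (none : Option (Fin m)) ∈
            (Finset.univ.map (⟨some, Option.some_injective _⟩ : Fin m ↪ Option (Fin m))) at hv
          simp at hv
        · exact hs i
    rcases Nat.eq_zero_or_pos k with hk | hk
    · subst hk
      rw [key 0 (N.state (starG α 1) n (some ⟨0, Nat.one_pos⟩))
            (fun i => absurd i.2 (by omega)),
          key 1 (N.state (starG α 1) n (some ⟨0, Nat.one_pos⟩))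
            (fun i => star_leaf_state N 1 1 n i ⟨0, Nat.one_pos⟩)]
      rw [hagg (Multiset.replicate 0 _), hagg (Multiset.replicate 1 _),
          capProj_replicate, capProj_replicate]
      simp
    · rw [key k (N.state (starG α k) n (some ⟨0, hk⟩))
            (fun i => star_leaf_state N k k n i ⟨0, hk⟩),
          key (k+1) (N.state (starG α k) n (some ⟨0, hk⟩))
            (fun i => star_leaf_state N (k+1) k n i ⟨0, hk⟩)]
      rw [hagg (Multiset.replicate k _), hagg (Multiset.replicate (k+1) _),
          capProj_replicate, capProj_replicate,
          show min k (k+1) = min k k by omega]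

/-- Unrestricted floating-point GNNs are strictly more expressive than
bounded ones: the property "the distinguished node has an even number of out-neighbours"
is expressible by a GNN over some finite feature value type, but for every `k`, no GNN whose
aggregation function is invariant under capping multiplicities at `k` expresses it. -/
theorem unrestricted_gnnf_strictly_more_expressive_than_bounded (α : Type) :
    (∃ (S : Type) (_ : Fintype S) (d : ℕ) (N : FGNN α S d),
      ∀ (G : LGraph α) (w : G.V), N.accepts G w ↔ Even (G.adj w).card) ∧
    (∀ (S : Type) (d k : ℕ) (N : FGNN α S d),
      (∀ M : Multiset (Fin d → S), N.agg M = N.agg (capProj k M)) →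
      ¬ ∀ (G : LGraph α) (w : G.V), N.accepts G w ↔ Even (G.adj w).card) := by
  constructor
  · refine ⟨Bool, inferInstance, 1, parityGNN α, fun G w => ?_⟩
    constructor
    · rintro ⟨n, hn⟩
      cases n with
      | zero =>
        exact absurd hn (by simp [FGNN.state, parityGNN, Set.mem_setOf_eq])
      | succ n =>
        rw [parity_state] at hn
        simpa [parityGNN, Set.mem_setOf_eq] using hn
    · intro h
      exact ⟨1, by rw [parity_state]; simpa [parityGNN, Set.mem_setOf_eq]⟩
  · intro S d k N hagg h
    have h1 := (h (starG α k) none)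
    have h2 := (h (starG α (k+1)) none)
    rw [star_adj_card] at h1 h2
    have hacc : N.accepts (starG α k) none ↔ N.accepts (starG α (k+1)) none := by
      unfold FGNN.accepts
      constructor <;> rintro ⟨n, hn⟩ <;> exact ⟨n, by
        first
        | rw [← star_center_state N k hagg n]; exact hn
        | rw [star_center_state N k hagg n]; exact hn⟩
    have := (h1.symm.trans hacc).trans h2
    rw [Nat.even_add_one] at this
    tauto
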